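/- Let q = p^m be a prime power and k | q-1 such that Γ(k,q) is connected. Then Γ(k,q) is bipartite if and only if q = 2 and k = 1 (in which case Γ(1,2) = K_2). -/
import Mathlib

/-- The set of nonzero `k`-th powers in a field. -/
def Rset (F : Type*) [Field F] (k : ℕ) : Set F := {x | ∃ y : F, y ≠ 0 ∧ y ^ k = x}

/-- If `Γ(k,q)` is connected (the connection set generates `F_q` additively), then
it is bipartite iff `q = 2` and `k = 1` (in which case `Γ(1,2) = K_2`). -/
theorem stmt_17 (F : Type*) [Field F] [Fintype F] (p m : ℕ) (hp : p.Prime)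
    (hm : 0 < m) (hcard : Fintype.card F = p ^ m)
    (k : ℕ) (hkpos : 0 < k) (hk : k ∣ p ^ m - 1)
    (hconn : AddSubgroup.closure (Rset F k) = ⊤) :
    (∃ c : F → Bool, ∀ u v : F, v - u ∈ Rset F k → c u ≠ c v) ↔
      (p ^ m = 2 ∧ k = 1) := by
  classical
  constructor
  · rintro ⟨c, H⟩
    -- powers of a k-th power are k-th powers
    have memR : ∀ (y : F), y ≠ 0 → ∀ i : ℕ, (y ^ k) ^ i ∈ Rset F k := by
      intro y hy i
      exact ⟨y ^ i, pow_ne_zero _ hy, by rw [← pow_mul, ← pow_mul, Nat.mul_comm]⟩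
    -- key parity lemma
    have aux : ∀ (a : F), (∀ i : ℕ, a ^ i ∈ Rset F k) →
        ∀ n : ℕ, ∀ u : F,
          c (u + ∑ i ∈ Finset.range n, a ^ i) = xor (decide (Odd n)) (c u) := by
      intro a ha n
      induction n with
      | zero => intro u; simp
      | succ n ih =>
        intro u
        rw [Finset.sum_range_succ, ← add_assoc]
        have h := H (u + ∑ i ∈ Finset.range n, a ^ i)
          (u + (∑ i ∈ Finset.range n, a ^ i) + a ^ n) (by
            have : u + (∑ i ∈ Finset.range n, a ^ i) + a ^ n -
                (u + ∑ i ∈ Finset.range n, a ^ i) = a ^ n := by ring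
            rw [this]; exact ha n)
        rw [ih u] at h
        rcases Bool.eq_false_or_eq_true (c (u + (∑ i ∈ Finset.range n, a ^ i) + a ^ n)) with
          h1 | h1 <;>
        · rw [h1]
          rw [h1] at h
          simp [Nat.odd_add_one] at h ⊢
          revert h
          rcases Bool.eq_false_or_eq_true (c u) with h2 | h2 <;>
            rcases Decidable.em (Odd n) with h3 | h3 <;> simp [h2, h3, Nat.not_odd_iff_even.mp, Nat.not_odd_iff_even]
    have key : ∀ (a : F), (∀ i : ℕ, a ^ i ∈ Rset F k) →
        ∀ n : ℕ, Odd n → (∑ i ∈ Finset.range n, a ^ i) = 0 → False := by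
      intro a ha n hodd hsum
      have := aux a ha n 0
      rw [hsum] at this
      simp [hodd] at this
    have h1R : ∀ i : ℕ, (1 : F) ^ i ∈ Rset F k := by
      have := memR 1 one_ne_zero
      simpa using this
    have hq0 : ((p ^ m : ℕ) : F) = 0 := by
      have := FiniteField.cast_card_eq_zero F
      rwa [hcard] at this
    -- p = 2
    have hp2 : p = 2 := by
      by_contra hne
      have hoddq : Odd (p ^ m) := (hp.odd_of_ne_two hne).pow
      refine key 1 h1R (p ^ m) hoddq ?_
      simpa using hq0
    subst hp2
    have h2F : (2 : F) = 0 := by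
      have : ((2 : ℕ) : F) ^ m = 0 := by
        rw [← Nat.cast_pow]; exact hq0
      have := pow_eq_zero_iff hm.ne' |>.mp this
      exact_mod_cast this
    -- every element of R is 1
    have hRone : ∀ x ∈ Rset F k, x = 1 := by
      by_contra hcon
      push_neg at hcon
      obtain ⟨a, haR, ha1⟩ := hcon
      obtain ⟨y, hy, rfl⟩ := haR
      set a := y ^ k with ha
      have ha0 : a ≠ 0 := pow_ne_zero _ hy
      have hord : orderOf a ∣ 2 ^ m - 1 := by
        apply orderOf_dvd_of_pow_eq_one
        have := FiniteField.pow_card_sub_one_eq_one a ha0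
        rwa [hcard] at this
      have hoddq1 : Odd (2 ^ m - 1) := by
        refine Nat.Even.sub_odd ?_ ?_ odd_one
        · exact Nat.one_le_two_pow
        · exact (Nat.even_pow.mpr ⟨even_two, hm.ne'⟩)
      have hoddd : Odd (orderOf a) := by
        rw [← Nat.not_even_iff_odd] at hoddq1 ⊢
        intro he
        exact hoddq1 (even_iff_two_dvd.mpr ((even_iff_two_dvd.mp he).trans hord))
      have hsum0 : (∑ i ∈ Finset.range (orderOf a), a ^ i) = 0 := by
        have hg : (∑ i ∈ Finset.range (orderOf a), a ^ i) * (a - 1) =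
            a ^ orderOf a - 1 := geom_sum_mul a (orderOf a)
        rw [pow_orderOf_eq_one, sub_self] at hg
        rcases mul_eq_zero.mp hg with h | h
        · exact h
        · exact absurd (sub_eq_zero.mp h) ha1
      exact key a (memR y hy) (orderOf a) hoddd hsum0
    -- closure {1} = ⊤ forces card ≤ 2
    have hone : (1 : F) ∈ Rset F k := ⟨1, one_ne_zero, one_pow k⟩
    have hReq : Rset F k = {(1 : F)} := by
      apply Set.eq_singleton_iff_unique_mem.mpr
      exact ⟨hone, hRone⟩
    have hx01 : ∀ x : F, x = 0 ∨ x = 1 := by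
      intro x
      have hx : x ∈ AddSubgroup.closure (Rset F k) := by rw [hconn]; trivial
      rw [hReq, AddSubgroup.mem_closure_singleton] at hx
      obtain ⟨n, hn⟩ := hx
      rw [zsmul_eq_mul, mul_one] at hn
      rcases Int.even_or_odd n with ⟨j, hj⟩ | ⟨j, hj⟩
      · left
        rw [← hn, hj]
        push_cast
        rw [show ((j : F) + j) = 2 * j by ring, h2F, zero_mul]
      · right
        rw [← hn, hj]
        push_cast
        rw [show ((2 : F) * j + 1) = 2 * j + 1 by ring, h2F, zero_mul, zero_add]
    have hcard2 : Fintype.card F ≤ 2 := by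
      have hsub : (Finset.univ : Finset F) ⊆ {0, 1} := by
        intro x _
        rcases hx01 x with h | h <;> simp [h]
      calc Fintype.card F = Finset.univ.card := rfl
        _ ≤ ({0, 1} : Finset F).card := Finset.card_le_card hsub
        _ ≤ 2 := Finset.card_insert_le _ _ |>.trans (by simp)
    have hq2 : 2 ^ m = 2 := by
      have h1 : 2 ^ m ≤ 2 := hcard ▸ hcard2
      have h2 : 1 < 2 ^ m := Nat.one_lt_two_pow_iff.mpr hm.ne'
      omega
    refine ⟨hq2, ?_⟩
    rw [hq2] at hk
    simpa using Nat.eq_one_of_dvd_one (by simpa using hk)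
  · rintro ⟨hq2, hk1⟩
    rw [hq2] at hcard
    have h01 : ∀ x : F, x = 0 ∨ x = 1 := by
      intro x
      rcases eq_or_ne x 0 with h | h
      · exact Or.inl h
      · right
        have := FiniteField.pow_card_sub_one_eq_one x h
        rwa [hcard, pow_one] at this
    refine ⟨fun x => decide (x = 1), ?_⟩
    intro u v hv
    obtain ⟨y, hy, hyk⟩ := hv
    have hne : u ≠ v := by
      intro h
      rw [h, sub_self] at hyk
      exact hy (by simpa [hk1] using hyk)
    rcases h01 u with hu | hu <;> rcases h01 v with hv' | hv' <;>
      subst hu <;> subst hv' <;> simp_all
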